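/- arXiv:1706.09157 — 3 statements merged into one kernel-verified Lean document; each statement's English description precedes it below -/
import Mathlib

section
/- Suppose there is a homotopy commutative square with homotopy equivalences g : E ≃ E' and h : B ≃ B' satisfying p'∘g ≃ h∘p. Then for any map f : B' → X, secat_{f∘h}(p) = secat_f(p'). -/
open ContinuousMap Set

/-- `U ⊆ B` is `f`-categorical for `p : E → B`: it is open and admits `s : U → E`
with `f ∘ p ∘ s` homotopic to `f|_U`. -/
def IsFCatOpen {E B X : Type} [TopologicalSpace E] [TopologicalSpace B] [TopologicalSpace X]
    (p : C(E, B)) (f : C(B, X)) (U : Set B) : Prop :=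
  IsOpen U ∧ ∃ s : C(U, E), ((f.comp p).comp s).Homotopic (f.restrict U)

/-- The `f`-sectional category `secat_f(p)`: least `n` such that `B` is covered by
`n+1` `f`-categorical open sets (`⊤` if none exists). -/
noncomputable def secatF {E B X : Type} [TopologicalSpace E] [TopologicalSpace B] [TopologicalSpace X]
    (p : C(E, B)) (f : C(B, X)) : ℕ∞ :=
  sInf ((↑) '' {n : ℕ | ∃ U : Fin (n + 1) → Set B,
    (∀ i, IsFCatOpen p f (U i)) ∧ ⋃ i, U i = univ})

/-- The (normalized) Lusternik–Schnirelmann category of a map: least `n` such that the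
domain is covered by `n+1` open sets on each of which the map is null-homotopic. -/
noncomputable def catMap {B X : Type} [TopologicalSpace B] [TopologicalSpace X]
    (f : C(B, X)) : ℕ∞ :=
  sInf ((↑) '' {n : ℕ | ∃ U : Fin (n + 1) → Set B,
    (∀ i, IsOpen (U i) ∧ (f.restrict (U i)).Nullhomotopic) ∧ ⋃ i, U i = univ})

/-- The path fibration `π : X^I → X × X`, `π(α) = (α 0, α 1)`. -/
noncomputable def pathFib (X : Type) [TopologicalSpace X] : C(C(unitInterval, X), X × X) :=
  ⟨fun α => (α 0, α 1), by fun_prop⟩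

/-- The diagonal map `Δ : X → X × X`. -/
def diagMap (X : Type) [TopologicalSpace X] : C(X, X × X) := ⟨fun x => (x, x), by fun_prop⟩

/-- The topological complexity of a map, `TC(f) = secat_{f×f}(π)`. -/
noncomputable def TCmap {X Y : Type} [TopologicalSpace X] [TopologicalSpace Y] (f : C(X, Y)) : ℕ∞ :=
  secatF (pathFib X) (f.prodMap f)

lemma isFCatOpen_congr {E B X : Type} [TopologicalSpace E] [TopologicalSpace B] [TopologicalSpace X]
    (p : C(E, B)) {f f' : C(B, X)} (hf : f.Homotopic f') {U : Set B}
    (hU : IsFCatOpen p f U) : IsFCatOpen p f' U := by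
  obtain ⟨hopen, s, hs⟩ := hU
  refine ⟨hopen, s, ?_⟩
  have h1 : ((f'.comp p).comp s).Homotopic ((f.comp p).comp s) :=
    Homotopic.comp (Homotopic.comp hf.symm (Homotopic.refl p)) (Homotopic.refl s)
  have h2 : (f.restrict U).Homotopic (f'.restrict U) := by
    have e : f.restrict U = f.comp ⟨Subtype.val, continuous_subtype_val⟩ := by ext x; rfl
    have e' : f'.restrict U = f'.comp ⟨Subtype.val, continuous_subtype_val⟩ := by ext x; rfl
    rw [e, e']
    exact Homotopic.comp hf (Homotopic.refl _)
  exact (h1.trans hs).trans h2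

lemma secatF_le_congr {E B X : Type} [TopologicalSpace E] [TopologicalSpace B] [TopologicalSpace X]
    (p : C(E, B)) {f f' : C(B, X)} (hf : f.Homotopic f') : secatF p f' ≤ secatF p f := by
  apply sInf_le_sInf
  rintro x ⟨n, ⟨U, hU, hcov⟩, rfl⟩
  exact ⟨n, ⟨U, fun i => isFCatOpen_congr p hf (hU i), hcov⟩, rfl⟩

lemma secatF_congr {E B X : Type} [TopologicalSpace E] [TopologicalSpace B] [TopologicalSpace X]
    (p : C(E, B)) {f f' : C(B, X)} (hf : f.Homotopic f') : secatF p f = secatF p f' :=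
  le_antisymm (secatF_le_congr p hf.symm) (secatF_le_congr p hf)

lemma secatF_le_aux {E B E' B' X : Type} [TopologicalSpace E] [TopologicalSpace B]
    [TopologicalSpace E'] [TopologicalSpace B'] [TopologicalSpace X]
    (p : C(E, B)) (p' : C(E', B')) (g : C(E, E')) (g' : C(E', E))
    (hg : (g.comp g').Homotopic (ContinuousMap.id E'))
    (h : C(B, B')) (f : C(B', X))
    (hsq : (p'.comp g).Homotopic (h.comp p)) :
    secatF p (f.comp h) ≤ secatF p' f := by
  apply sInf_le_sInf
  rintro x ⟨n, ⟨U, hU, hcov⟩, rfl⟩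
  refine ⟨n, ⟨fun i => h ⁻¹' (U i), fun i => ?_, ?_⟩, rfl⟩
  · obtain ⟨hopen, s', hs'⟩ := hU i
    refine ⟨hopen.preimage h.continuous, ?_⟩
    set V : Set B := h ⁻¹' (U i) with hV
    refine ⟨g'.comp (s'.comp ⟨fun x => ⟨h x, x.2⟩, by fun_prop⟩), ?_⟩
    set hr : C(V, U i) := ⟨fun x => ⟨h x, x.2⟩, by fun_prop⟩ with hhr
    have step1 : (((f.comp h).comp p).comp (g'.comp (s'.comp hr))).Homotopic
        (((f.comp (p'.comp g)).comp g').comp (s'.comp hr)) := by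
      have e : ((f.comp h).comp p).comp (g'.comp (s'.comp hr)) =
          ((f.comp (h.comp p)).comp g').comp (s'.comp hr) := by ext x; rfl
      rw [e]
      exact Homotopic.comp (Homotopic.comp
        (Homotopic.comp (Homotopic.refl f) hsq.symm) (Homotopic.refl g')) (Homotopic.refl (s'.comp hr))
    have step2 : (((f.comp (p'.comp g)).comp g').comp (s'.comp hr)).Homotopic
        ((f.comp p').comp (s'.comp hr)) := by
      have e1 : ((f.comp (p'.comp g)).comp g').comp (s'.comp hr) =
          ((f.comp p').comp (g.comp g')).comp (s'.comp hr) := by ext x; rfl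
      have e2 : (f.comp p').comp (s'.comp hr) =
          ((f.comp p').comp (ContinuousMap.id E')).comp (s'.comp hr) := by ext x; rfl
      rw [e1, e2]
      exact Homotopic.comp (Homotopic.comp (Homotopic.refl (f.comp p')) hg) (Homotopic.refl (s'.comp hr))
    have step3 : ((f.comp p').comp (s'.comp hr)).Homotopic ((f.comp h).restrict V) := by
      have e1 : (f.comp p').comp (s'.comp hr) = ((f.comp p').comp s').comp hr := by ext x; rfl
      have e2 : (f.comp h).restrict V = (f.restrict (U i)).comp hr := by ext x; rfl
      rw [e1, e2]
      exact Homotopic.comp hs' (Homotopic.refl hr)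
    exact (step1.trans step2).trans step3
  · rw [← preimage_iUnion, hcov, preimage_univ]

/-- If `p ∼ p'` via homotopy equivalences `g : E ≃ E'`, `h : B ≃ B'` with
`p' ∘ g ≃ h ∘ p`, then for any `f : B' → X`, `secat_{f∘h}(p) = secat_f(p')`. -/
theorem secatF_eq_of_homotopyEquiv {E B E' B' X : Type} [TopologicalSpace E] [TopologicalSpace B]
    [TopologicalSpace E'] [TopologicalSpace B'] [TopologicalSpace X]
    (p : C(E, B)) (p' : C(E', B')) (g : E ≃ₕ E') (h : B ≃ₕ B')
    (hsq : (p'.comp g.toFun).Homotopic (h.toFun.comp p))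
    (f : C(B', X)) :
    secatF p (f.comp h.toFun) = secatF p' f := by
  have le1 : secatF p (f.comp h.toFun) ≤ secatF p' f :=
    secatF_le_aux p p' g.toFun g.invFun g.right_inv h.toFun f hsq
  have hsq2 : (p.comp g.invFun).Homotopic (h.invFun.comp p') := by
    have s1 : (p.comp g.invFun).Homotopic
        ((h.invFun.comp (h.toFun.comp p)).comp g.invFun) := by
      have e : (h.invFun.comp (h.toFun.comp p)).comp g.invFun =
          ((h.invFun.comp h.toFun).comp p).comp g.invFun := by ext x; rfl
      have e2 : p.comp g.invFun =
          (((ContinuousMap.id B).comp p)).comp g.invFun := by ext x; rfl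
      rw [e, e2]
      exact Homotopic.comp (Homotopic.comp h.left_inv.symm (Homotopic.refl p)) (Homotopic.refl g.invFun)
    have s2 : ((h.invFun.comp (h.toFun.comp p)).comp g.invFun).Homotopic
        ((h.invFun.comp (p'.comp g.toFun)).comp g.invFun) :=
      Homotopic.comp (Homotopic.comp (Homotopic.refl h.invFun) hsq.symm) (Homotopic.refl g.invFun)
    have s3 : ((h.invFun.comp (p'.comp g.toFun)).comp g.invFun).Homotopic
        (h.invFun.comp p') := by
      have e : (h.invFun.comp (p'.comp g.toFun)).comp g.invFun =
          (h.invFun.comp p').comp (g.toFun.comp g.invFun) := by ext x; rfl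
      have e2 : h.invFun.comp p' =
          (h.invFun.comp p').comp (ContinuousMap.id E') := by ext x; rfl
      rw [e, e2]
      exact Homotopic.comp (Homotopic.refl _) g.right_inv
    exact (s1.trans s2).trans s3
  have le2 : secatF p' ((f.comp h.toFun).comp h.invFun) ≤ secatF p (f.comp h.toFun) :=
    secatF_le_aux p' p g.invFun g.toFun g.left_inv h.invFun (f.comp h.toFun) hsq2
  have congr2 : secatF p' f = secatF p' ((f.comp h.toFun).comp h.invFun) := by
    apply secatF_congr
    have e : (f.comp h.toFun).comp h.invFun = f.comp (h.toFun.comp h.invFun) := by ext x; rfl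
    have e2 : f = f.comp (ContinuousMap.id B') := by ext x; rfl
    rw [e]; nth_rewrite 1 [e2]
    exact Homotopic.comp (Homotopic.refl f) h.right_inv.symm
  exact le_antisymm le1 (congr2 ▸ le2)
end

section
/- For any map f : X → Y, cat(f) ≤ TC(f). -/
open ContinuousMap Set

/-- `cat(f) ≤ TC(f)` for any map `f : X → Y` between path-connected spaces. -/
theorem catMap_le_TCmap {X Y : Type} [TopologicalSpace X] [TopologicalSpace Y]
    [PathConnectedSpace X] [PathConnectedSpace Y] (f : C(X, Y)) :
    catMap f ≤ TCmap f := by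
  apply sInf_le_sInf
  apply Set.image_mono
  rintro n ⟨U, hU, hcov⟩
  obtain ⟨x₀⟩ : Nonempty X := inferInstance
  refine ⟨fun i => (fun x => (x₀, x)) ⁻¹' U i, fun i => ?_, ?_⟩
  · obtain ⟨hopen, s, H⟩ := hU i
    set V : Set X := (fun x => (x₀, x)) ⁻¹' U i with hV
    refine ⟨hopen.preimage (by fun_prop), ?_⟩
    -- inclusion map V → U i
    let j : C(V, U i) := ⟨fun x => ⟨(x₀, x.1), x.2⟩, by
      apply Continuous.subtype_mk
      fun_prop⟩
    let L := ((f.prodMap f).comp (pathFib X)).comp s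
    let R := (f.prodMap f).restrict (U i)
    have H1 : (L.comp j).Homotopic (R.comp j) :=
      ContinuousMap.Homotopic.comp H (ContinuousMap.Homotopic.refl j)
    let fst : C(Y × Y, Y) := ⟨Prod.fst, continuous_fst⟩
    let snd : C(Y × Y, Y) := ⟨Prod.snd, continuous_snd⟩
    have hA : (fst.comp (L.comp j)).Homotopic (fst.comp (R.comp j)) :=
      ContinuousMap.Homotopic.comp (ContinuousMap.Homotopic.refl fst) H1
    have hB : (snd.comp (L.comp j)).Homotopic (snd.comp (R.comp j)) :=
      ContinuousMap.Homotopic.comp (ContinuousMap.Homotopic.refl snd) H1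
    have heqB : snd.comp (R.comp j) = f.restrict V := by
      ext x; rfl
    have heqA : fst.comp (R.comp j) = ContinuousMap.const V (f x₀) := by
      ext x; rfl
    -- homotopy from evaluation at 0 to evaluation at 1 along the path
    have hC : (fst.comp (L.comp j)).Homotopic (snd.comp (L.comp j)) := by
      refine ⟨⟨⟨fun p => f ((s (j p.2)) p.1), ?_⟩, fun x => rfl, fun x => rfl⟩⟩
      exact (map_continuous f).comp
        (ContinuousEval.continuous_eval.comp
          (((s.comp j).continuous.comp continuous_snd).prodMk continuous_fst))
    refine ⟨f x₀, ?_⟩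
    rw [← heqB, ← heqA]
    exact hB.symm.trans (hC.symm.trans hA)
  · ext x
    simp only [Set.mem_iUnion, Set.mem_preimage, Set.mem_univ, iff_true]
    have : (x₀, x) ∈ ⋃ i, U i := hcov ▸ Set.mem_univ _
    simpa using this
end

section
/- If q : Z → Y is a fibration and q_n : (*ⁿ_Y Z) ×_Y Z → *ⁿ_Y Z is the pullback of q along the n-fold join fibration *ⁿ_Y q : *ⁿ_Y Z → Y, then secat(q_n) ≤ n. -/
open ContinuousMap Set

/-- A (Hurewicz) fibration: the homotopy lifting property with respect to all spaces. -/
def IsFibration {Z Y : Type} [TopologicalSpace Z] [TopologicalSpace Y] (q : C(Z, Y)) : Prop :=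
  ∀ (W : Type) [TopologicalSpace W] (h : C(W, Z)) (H : C(W × unitInterval, Y)),
    (∀ w, H (w, 0) = q (h w)) →
    ∃ G : C(W × unitInterval, Z), (∀ w, G (w, 0) = h w) ∧ ∀ w t, q (G (w, t)) = H (w, t)

/-- The identifications defining the double mapping cylinder of the two projections
of the fiber product of `q₁` and `q₂` over `Y`: at time `0` collapse to `Z₁`, at
time `1` collapse to `Z₂`. -/
inductive JoinRel {Z₁ Z₂ Y : Type} (q₁ : Z₁ → Y) (q₂ : Z₂ → Y) :
    ({x : Z₁ × Z₂ // q₁ x.1 = q₂ x.2} × unitInterval) ⊕ (Z₁ ⊕ Z₂) →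
    ({x : Z₁ × Z₂ // q₁ x.1 = q₂ x.2} × unitInterval) ⊕ (Z₁ ⊕ Z₂) → Prop
  | zero (x) : JoinRel q₁ q₂ (Sum.inl (x, 0)) (Sum.inr (Sum.inl x.1.1))
  | one (x) : JoinRel q₁ q₂ (Sum.inl (x, 1)) (Sum.inr (Sum.inr x.1.2))

/-- The fiberwise join `Z₁ *_Y Z₂`: the double mapping cylinder of the two projections
of the fiber product `Z₁ ×_Y Z₂`. -/
def FibJoin {Z₁ Z₂ Y : Type} [TopologicalSpace Z₁] [TopologicalSpace Z₂] [TopologicalSpace Y]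
    (q₁ : C(Z₁, Y)) (q₂ : C(Z₂, Y)) : Type :=
  Quot (JoinRel q₁ q₂)

instance {Z₁ Z₂ Y : Type} [TopologicalSpace Z₁] [TopologicalSpace Z₂] [TopologicalSpace Y]
    (q₁ : C(Z₁, Y)) (q₂ : C(Z₂, Y)) : TopologicalSpace (FibJoin q₁ q₂) :=
  instTopologicalSpaceQuot

/-- The induced map `Z₁ *_Y Z₂ → Y` of the fiberwise join. -/
noncomputable def fibJoinMap {Z₁ Z₂ Y : Type} [TopologicalSpace Z₁] [TopologicalSpace Z₂]
    [TopologicalSpace Y] (q₁ : C(Z₁, Y)) (q₂ : C(Z₂, Y)) : C(FibJoin q₁ q₂, Y) :=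
  ⟨Quot.lift (Sum.elim (fun x => q₁ x.1.1.1) (Sum.elim q₁ q₂))
      (by rintro _ _ (⟨x⟩ | ⟨x⟩) <;> simp [x.2]),
    continuous_quot_lift _ (Continuous.sumElim
      (q₁.continuous.comp (continuous_fst.comp (continuous_subtype_val.comp continuous_fst)))
      (Continuous.sumElim q₁.continuous q₂.continuous))⟩

/-- A space over `Y`: the carrier, its topology and the structure map to `Y`. -/
structure SpaceOver (Y : Type) [TopologicalSpace Y] where
  total : Type
  top : TopologicalSpace total
  proj : @ContinuousMap total Y top _

attribute [instance] SpaceOver.top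

/-- The `n`-fold fiberwise join of `q : Z → Y` with itself:
`*⁰_Y Z = Z` and `*ⁿ_Y Z = (*ⁿ⁻¹_Y Z) *_Y Z`, together with the induced map
`*ⁿ_Y q : *ⁿ_Y Z → Y`. -/
noncomputable def nFoldJoin {Z Y : Type} [TopologicalSpace Z] [TopologicalSpace Y]
    (q : C(Z, Y)) : ℕ → SpaceOver Y
  | 0 => ⟨Z, inferInstance, q⟩
  | n + 1 => ⟨FibJoin (nFoldJoin q n).proj q, inferInstance, fibJoinMap (nFoldJoin q n).proj q⟩

open Topology

private lemma quot_preimage_image_eq {A : Type} {r : A → A → Prop} {V : Set A}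
    (h : ∀ a b, r a b → (a ∈ V ↔ b ∈ V)) :
    Quot.mk r ⁻¹' (Quot.mk r '' V) = V := by
  have key : ∀ a b, Relation.EqvGen r a b → (a ∈ V ↔ b ∈ V) := by
    intro a b hab
    induction hab with
    | rel a b hr => exact h a b hr
    | refl => exact Iff.rfl
    | symm _ _ _ ih => exact ih.symm
    | trans _ _ _ _ _ ih1 ih2 => exact ih1.trans ih2
  ext a
  constructor
  · rintro ⟨b, hb, hba⟩
    exact (key b a (Quot.eq.mp hba)).mp hb
  · exact fun ha => ⟨a, ha, rfl⟩

private lemma unitInterval_zero_ne_one : (0 : unitInterval) ≠ 1 :=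
  fun h => zero_ne_one (congrArg Subtype.val h)

private lemma step {Z Y : Type} [TopologicalSpace Z] [TopologicalSpace Y]
    (q : C(Z, Y)) (z₀ : Z) (W : SpaceOver Y) {m : ℕ}
    (U : Fin (m + 1) → Set W.total) (hUo : ∀ i, IsOpen (U i)) (hUc : ⋃ i, U i = univ)
    (c : Fin (m + 1) → W.total → Z) (hcont : ∀ i, ContinuousOn (c i) (U i))
    (hcq : ∀ i, ∀ y ∈ U i, q (c i y) = W.proj y) :
    ∃ U' : Fin (m + 2) → Set (FibJoin W.proj q),
      (∀ i, IsOpen (U' i)) ∧ (⋃ i, U' i = univ) ∧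
      ∀ i, ∃ c' : FibJoin W.proj q → Z,
        ContinuousOn c' (U' i) ∧ ∀ y ∈ U' i, q (c' y) = fibJoinMap W.proj q y := by
  set P := {x : W.total × Z // W.proj x.1 = q x.2} with hP
  set A := (P × unitInterval) ⊕ (W.total ⊕ Z) with hA
  set r := JoinRel (W.proj : W.total → Y) (q : Z → Y) with hr
  have hQM : @IsQuotientMap A (FibJoin W.proj q) _ _ (Quot.mk r) := isQuotientMap_quot_mk
  let Vold : Fin (m + 1) → Set A := fun i =>
    {a | Sum.elim (fun p : P × unitInterval => p.2 ≠ 1 ∧ p.1.1.1 ∈ U i)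
      (Sum.elim (fun b => b ∈ U i) (fun _ => False)) a}
  let Vnew : Set A :=
    {a | Sum.elim (fun p : P × unitInterval => p.2 ≠ 0)
      (Sum.elim (fun _ => False) (fun _ => True)) a}
  have hVoldSat : ∀ i, ∀ a b, r a b → (a ∈ Vold i ↔ b ∈ Vold i) := by
    intro i a b hab
    cases hab with
    | zero x => exact ⟨fun h => h.2, fun h => ⟨unitInterval_zero_ne_one, h⟩⟩
    | one x => exact ⟨fun h => h.1 rfl, False.elim⟩
  have hVnewSat : ∀ a b, r a b → (a ∈ Vnew ↔ b ∈ Vnew) := by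
    intro a b hab
    cases hab with
    | zero x => exact ⟨fun h => h rfl, False.elim⟩
    | one x => exact ⟨fun _ => trivial, fun _ => unitInterval_zero_ne_one.symm⟩
  have hVoldOpen : ∀ i, IsOpen (Vold i) := by
    intro i
    rw [isOpen_sum_iff]
    constructor
    · show IsOpen {p : P × unitInterval | p.2 ≠ 1 ∧ p.1.1.1 ∈ U i}
      have h1 : IsOpen {p : P × unitInterval | p.2 ≠ 1} :=
        isOpen_ne_fun continuous_snd continuous_const
      have h2 : IsOpen {p : P × unitInterval | p.1.1.1 ∈ U i} :=
        (hUo i).preimage (f := fun p : P × unitInterval => p.1.1.1)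
          ((continuous_fst.comp continuous_subtype_val).comp continuous_fst)
      exact h1.and h2
    · rw [isOpen_sum_iff]
      constructor
      · show IsOpen {b : W.total | b ∈ U i}
        exact hUo i
      · show IsOpen {_z : Z | False}
        exact isOpen_empty
  have hVnewOpen : IsOpen Vnew := by
    rw [isOpen_sum_iff]
    constructor
    · show IsOpen {p : P × unitInterval | p.2 ≠ 0}
      exact isOpen_ne_fun continuous_snd continuous_const
    · rw [isOpen_sum_iff]
      constructor
      · show IsOpen {_b : W.total | False}
        exact isOpen_empty
      · show IsOpen {_z : Z | True}
        exact isOpen_univ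
  let Uold : Fin (m + 1) → Set (FibJoin W.proj q) := fun i => Quot.mk r '' Vold i
  let Unew : Set (FibJoin W.proj q) := Quot.mk r '' Vnew
  have hpre_old : ∀ i, Quot.mk r ⁻¹' Uold i = Vold i :=
    fun i => quot_preimage_image_eq (hVoldSat i)
  have hpre_new : Quot.mk r ⁻¹' Unew = Vnew := quot_preimage_image_eq hVnewSat
  have hUoldOpen : ∀ i, IsOpen (Uold i) := fun i =>
    hQM.isOpen_preimage.mp ((hpre_old i) ▸ hVoldOpen i)
  have hUnewOpen : IsOpen Unew := hQM.isOpen_preimage.mp (hpre_new ▸ hVnewOpen)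
  refine ⟨Fin.lastCases Unew (fun j => Uold j), ?_, ?_, ?_⟩
  · intro i
    induction i using Fin.lastCases with
    | last => simpa using hUnewOpen
    | cast j => simpa using hUoldOpen j
  · ext y
    simp only [mem_iUnion, mem_univ, iff_true]
    induction y using Quot.ind with
    | _ a =>
      obtain (⟨x, t⟩ | b | z) := a
      · by_cases ht : t = 1
        · subst ht
          refine ⟨Fin.last _, ?_⟩
          simp only [Fin.lastCases_last]
          exact ⟨Sum.inr (Sum.inr x.1.2), trivial, (Quot.sound (JoinRel.one x)).symm⟩
        · have hx : x.1.1 ∈ ⋃ i, U i := hUc ▸ mem_univ _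
          obtain ⟨i, hi⟩ := mem_iUnion.mp hx
          refine ⟨i.castSucc, ?_⟩
          simp only [Fin.lastCases_castSucc]
          exact ⟨Sum.inl (x, t), ⟨ht, hi⟩, rfl⟩
      · have hb : b ∈ ⋃ i, U i := hUc ▸ mem_univ _
        obtain ⟨i, hi⟩ := mem_iUnion.mp hb
        refine ⟨i.castSucc, ?_⟩
        simp only [Fin.lastCases_castSucc]
        exact ⟨Sum.inr (Sum.inl b), hi, rfl⟩
      · refine ⟨Fin.last _, ?_⟩
        simp only [Fin.lastCases_last]
        exact ⟨Sum.inr (Sum.inr z), trivial, rfl⟩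
  · intro i
    induction i using Fin.lastCases with
    | last =>
      simp only [Fin.lastCases_last]
      refine ⟨Quot.lift (Sum.elim (fun p : P × unitInterval => if p.2 = 0 then z₀ else p.1.1.2)
        (Sum.elim (fun _ => z₀) (fun z => z))) ?_, ?_, ?_⟩
      · rintro a b (⟨x⟩ | ⟨x⟩)
        · rw [Sum.elim_inl, Sum.elim_inr, Sum.elim_inl]
          exact if_pos rfl
        · rw [Sum.elim_inl, Sum.elim_inr, Sum.elim_inr]
          exact if_neg unitInterval_zero_ne_one.symm
      · erw [hQM.continuousOn_isOpen_iff hUnewOpen, hpre_new]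
        intro a ha
        apply ContinuousAt.continuousWithinAt
        obtain (⟨x, t⟩ | b | z) := a
        · apply (IsOpenEmbedding.inl.continuousAt_iff).mp
          have h1 : ContinuousAt (fun p : P × unitInterval => p.1.1.2) (x, t) :=
            ((continuous_snd.comp continuous_subtype_val).comp continuous_fst).continuousAt
          refine h1.congr ?_
          have hmem : {p : P × unitInterval | p.2 ≠ 0} ∈ 𝓝 (x, t) :=
            (isOpen_ne_fun continuous_snd continuous_const).mem_nhds ha
          exact Filter.eventuallyEq_of_mem hmem (fun p hp => (if_neg hp).symm)
        · exact absurd ha (fun h => h)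
        · apply ((IsOpenEmbedding.inr.comp IsOpenEmbedding.inr).continuousAt_iff).mp
          exact continuous_id.continuousAt
      · rintro y ⟨a, ha, rfl⟩
        obtain (⟨x, t⟩ | b | z) := a
        · have ht : t ≠ 0 := ha
          show q (if t = 0 then z₀ else x.1.2) = W.proj x.1.1
          rw [if_neg ht]
          exact x.2.symm
        · exact absurd ha (fun h => h)
        · rfl
    | cast j =>
      simp only [Fin.lastCases_castSucc]
      refine ⟨Quot.lift (Sum.elim (fun p : P × unitInterval => if p.2 = 1 then z₀ else c j p.1.1.1)
        (Sum.elim (c j) (fun _ => z₀))) ?_, ?_, ?_⟩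
      · rintro a b (⟨x⟩ | ⟨x⟩)
        · rw [Sum.elim_inl, Sum.elim_inr, Sum.elim_inl]
          exact if_neg unitInterval_zero_ne_one
        · rw [Sum.elim_inl, Sum.elim_inr, Sum.elim_inr]
          exact if_pos rfl
      · erw [hQM.continuousOn_isOpen_iff (hUoldOpen j), hpre_old]
        intro a ha
        apply ContinuousAt.continuousWithinAt
        obtain (⟨x, t⟩ | b | z) := a
        · apply (IsOpenEmbedding.inl.continuousAt_iff).mp
          obtain ⟨ht, hx⟩ : t ≠ 1 ∧ x.1.1 ∈ U j := ha
          have h1 : ContinuousAt (fun p : P × unitInterval => c j p.1.1.1) (x, t) :=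
            ContinuousAt.comp ((hcont j).continuousAt ((hUo j).mem_nhds hx))
              ((continuous_fst.comp continuous_subtype_val).comp continuous_fst).continuousAt
          refine h1.congr ?_
          have hmem : {p : P × unitInterval | p.2 ≠ 1} ∈ 𝓝 (x, t) :=
            (isOpen_ne_fun continuous_snd continuous_const).mem_nhds ht
          exact Filter.eventuallyEq_of_mem hmem (fun p hp => (if_neg hp).symm)
        · apply ((IsOpenEmbedding.inr.comp IsOpenEmbedding.inl).continuousAt_iff).mp
          exact (hcont j).continuousAt ((hUo j).mem_nhds ha)
        · exact absurd ha (fun h => h)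
      · rintro y ⟨a, ha, rfl⟩
        obtain (⟨x, t⟩ | b | z) := a
        · obtain ⟨ht, hx⟩ : t ≠ 1 ∧ x.1.1 ∈ U j := ha
          show q (if t = 1 then z₀ else c j x.1.1) = W.proj x.1.1
          rw [if_neg ht]
          exact hcq j _ hx
        · exact hcq j b ha
        · exact absurd ha (fun h => h)

private lemma nFoldJoin_isEmpty {Z Y : Type} [TopologicalSpace Z] [TopologicalSpace Y]
    (q : C(Z, Y)) (hZ : IsEmpty Z) (n : ℕ) : IsEmpty (nFoldJoin q n).total := by
  induction n with
  | zero => exact hZ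
  | succ n ih =>
    haveI := ih; haveI := hZ
    show IsEmpty (Quot (JoinRel (nFoldJoin q n).proj q))
    infer_instance

private lemma key {Z Y : Type} [TopologicalSpace Z] [TopologicalSpace Y]
    (q : C(Z, Y)) (n : ℕ) :
    ∃ U : Fin (n + 1) → Set (nFoldJoin q n).total,
      (∀ i, IsOpen (U i)) ∧ (⋃ i, U i = univ) ∧
      ∀ i, ∃ c : (nFoldJoin q n).total → Z,
        ContinuousOn c (U i) ∧ ∀ y ∈ U i, q (c y) = (nFoldJoin q n).proj y := by
  rcases isEmpty_or_nonempty Z with hZ | hZ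
  · have hE := nFoldJoin_isEmpty q hZ n
    exact ⟨fun _ => univ, fun _ => isOpen_univ, Set.iUnion_const _,
      fun i => ⟨fun y => hE.elim y, fun y _ => hE.elim y, fun y _ => hE.elim y⟩⟩
  · obtain ⟨z₀⟩ := hZ
    induction n with
    | zero =>
      exact ⟨fun _ => univ, fun _ => isOpen_univ, Set.iUnion_const _,
        fun _ => ⟨fun z => z, continuous_id.continuousOn, fun y _ => rfl⟩⟩
    | succ n ih =>
      obtain ⟨U, hUo, hUc, hUs⟩ := ih
      choose c hcont hcq using hUs
      exact step q z₀ (nFoldJoin q n) U hUo hUc c hcont hcq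

/-- if `q : Z → Y` is a fibration and `q_n : (*ⁿ_Y Z) ×_Y Z → *ⁿ_Y Z` is the
pullback of `q` along the `n`-fold join fibration `*ⁿ_Y q`, then `secat(q_n) ≤ n`
(sectional category being `secat(q_n) = secat_{id}(q_n)`). -/
theorem secat_pullback_nFoldJoin_le {Z Y : Type} [TopologicalSpace Z] [TopologicalSpace Y]
    (q : C(Z, Y)) (hq : IsFibration q) (n : ℕ)
    (qn : C({x : (nFoldJoin q n).total × Z // (nFoldJoin q n).proj x.1 = q x.2},
            (nFoldJoin q n).total))
    (hqn : ∀ x, qn x = x.1.1) :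
    secatF qn (ContinuousMap.id (nFoldJoin q n).total) ≤ (n : ℕ∞) := by
  obtain ⟨U, hUo, hUc, hUs⟩ := key q n
  unfold secatF
  refine sInf_le ⟨n, ⟨U, fun i => ?_, hUc⟩, rfl⟩
  obtain ⟨c, hcont, hcq⟩ := hUs i
  refine ⟨hUo i, ?_⟩
  refine ⟨⟨fun u => ⟨(u.1, c u.1), (hcq u.1 u.2).symm⟩, ?_⟩, ?_⟩
  · exact (continuous_subtype_val.prodMk hcont.restrict).subtype_mk _
  · have h : ((ContinuousMap.id _).comp qn).comp
        ⟨fun u => (⟨(u.1, c u.1), (hcq u.1 u.2).symm⟩ :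
          {x : (nFoldJoin q n).total × Z // (nFoldJoin q n).proj x.1 = q x.2}),
          (continuous_subtype_val.prodMk hcont.restrict).subtype_mk _⟩ =
        (ContinuousMap.id _).restrict (U i) :=
      ContinuousMap.ext fun u => by simp [hqn]; rfl
    rw [h]
end
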